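/- If a chopped real (x, Π) engulfs (x', Π'), then every y matching (x, Π) also matches (x', Π'). -/
import Mathlib


/-- `a : ℕ → ℕ` codes a partition of ℕ into consecutive finite intervals
`[a n, a (n+1))` with `a 0 = 0` and `a` strictly increasing. -/
def IntervalPartition (a : ℕ → ℕ) : Prop := a 0 = 0 ∧ StrictMono a

/-- `y` matches the chopped real `(x, a)`: `y` agrees with `x` on infinitely
many intervals of the partition. -/
def Matches (y : ℕ → Bool) (x : ℕ → Bool) (a : ℕ → ℕ) : Prop :=
  { n : ℕ | ∀ i ∈ Set.Ico (a n) (a (n + 1)), y i = x i }.Infinite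

/-- The set of reals matching the chopped real `(x, a)`. -/
def MatchSet (x : ℕ → Bool) (a : ℕ → ℕ) : Set (ℕ → Bool) := { y | Matches y x a }

/-- `(x, a)` engulfs `(x', a')`: all but finitely many intervals of `a` include
an interval of `a'` on which `x` and `x'` agree. -/
def Engulfs (x : ℕ → Bool) (a : ℕ → ℕ) (x' : ℕ → Bool) (a' : ℕ → ℕ) : Prop :=
  { n : ℕ | ¬ ∃ m : ℕ, Set.Ico (a' m) (a' (m + 1)) ⊆ Set.Ico (a n) (a (n + 1)) ∧
      ∀ i ∈ Set.Ico (a' m) (a' (m + 1)), x i = x' i }.Finite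

/-- If `(x, a)` engulfs `(x', a')`, then every `y` matching `(x, a)` also
matches `(x', a')`. -/
theorem stmt7 (x x' : ℕ → Bool) (a a' : ℕ → ℕ)
    (ha : IntervalPartition a) (ha' : IntervalPartition a')
    (heng : Engulfs x a x' a') :
    ∀ y : ℕ → Bool, Matches y x a → Matches y x' a' := by
  intro y hy
  set B := { n : ℕ | ¬ ∃ m : ℕ, Set.Ico (a' m) (a' (m + 1)) ⊆ Set.Ico (a n) (a (n + 1)) ∧
      ∀ i ∈ Set.Ico (a' m) (a' (m + 1)), x i = x' i } with hB
  set S := { n : ℕ | ∀ i ∈ Set.Ico (a n) (a (n + 1)), y i = x i } with hSdef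
  have hS : (S \ B).Infinite := hy.diff heng
  have h : ∀ n : ℕ, ∃ m : ℕ, n ∈ S \ B →
      Set.Ico (a' m) (a' (m + 1)) ⊆ Set.Ico (a n) (a (n + 1)) ∧
      ∀ i ∈ Set.Ico (a' m) (a' (m + 1)), x i = x' i := by
    intro n
    by_cases hn : n ∈ S \ B
    · obtain ⟨m, hm⟩ := not_not.mp hn.2
      exact ⟨m, fun _ => hm⟩
    · exact ⟨0, fun h => absurd h hn⟩
  choose f hf using h
  have hne : ∀ m : ℕ, a' m ∈ Set.Ico (a' m) (a' (m + 1)) :=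
    fun m => ⟨le_rfl, ha'.2 (Nat.lt_succ_self m)⟩
  have hdisj : ∀ n1 n2 k : ℕ, k ∈ Set.Ico (a n1) (a (n1 + 1)) →
      k ∈ Set.Ico (a n2) (a (n2 + 1)) → n1 = n2 := by
    intro n1 n2 k h1 h2
    by_contra hne'
    rcases Nat.lt_or_ge n1 n2 with h | h
    · exact absurd (lt_of_lt_of_le h1.2 (ha.2.monotone h)) (not_lt.mpr h2.1)
    · rcases Nat.lt_of_le_of_ne h (Ne.symm hne') with h'
      exact absurd (lt_of_lt_of_le h2.2 (ha.2.monotone h')) (not_lt.mpr h1.1)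
  apply Set.infinite_of_injOn_mapsTo (f := f) (s := S \ B)
  · intro n1 hn1 n2 hn2 hfe
    have h1 := (hf n1 hn1).1 (hne (f n1))
    have h2 := (hf n2 hn2).1 (hne (f n2))
    rw [hfe] at h1
    exact hdisj n1 n2 _ h1 h2
  · intro n hn i hi
    rw [hn.1 i ((hf n hn).1 hi)] at *
    exact (hf n hn).2 i hi
  · exact hS
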